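/- Every closed symmetric monoidal structure on the category Set of sets has unit isomorphic to the one-element set, and its tensor product functor is naturally isomorphic to the cartesian product of sets. -/

import Mathlib

open CategoryTheory MonoidalCategory

universe u

set_option linter.unusedSectionVars false

/-- The cartesian product, as a functor `Type u × Type u ⥤ Type u`. -/
def cartesianProductFunctor : Type u × Type u ⥤ Type u where
  obj p := p.1 × p.2
  map f := TypeCat.ofHom fun x => (f.1 x.1, f.2 x.2)
  map_id := fun _ => rfl
  map_comp := fun _ _ => rfl

section Aux

open CategoryTheory.Limits

variable [M : MonoidalCategory (Type u)]

/-- `Y` as a colimit of `Y` copies of `PUnit`. -/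
def ptCocone (Y : Type u) : Cocone (Discrete.functor fun _ : Y => PUnit.{u + 1}) where
  pt := Y
  ι := Discrete.natTrans fun y => TypeCat.ofHom fun _ => y.as

def ptIsColimit (Y : Type u) : IsColimit (ptCocone Y) where
  desc s := TypeCat.ofHom fun y => s.ι.app ⟨y⟩ PUnit.unit
  fac s j := by obtain ⟨j⟩ := j; apply ConcreteCategory.hom_ext; intro u; cases u; rfl
  uniq s m hm := by apply ConcreteCategory.hom_ext; intro y; exact types_congr_hom (hm ⟨y⟩) PUnit.unit

def prodCocone (X Y : Type u) :
    Cocone ((Discrete.functor fun _ : Y => PUnit.{u + 1}) ⋙ tensorLeft X) where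
  pt := Y × (X ⊗ PUnit.{u + 1})
  ι := Discrete.natTrans fun y => TypeCat.ofHom fun u => (y.as, u)

def prodIsColimit (X Y : Type u) : IsColimit (prodCocone X Y) where
  desc s := TypeCat.ofHom fun (p : Y × (X ⊗ PUnit.{u + 1})) => s.ι.app ⟨p.1⟩ p.2
  fac s j := by obtain ⟨j⟩ := j; apply ConcreteCategory.hom_ext; intro u; rfl
  uniq s m hm := by apply ConcreteCategory.hom_ext; intro p; exact types_congr_hom (hm ⟨p.1⟩) p.2

/-- The canonical comparison map. -/
def theta (X Y : Type u) : Y × (X ⊗ PUnit.{u + 1}) → (X ⊗ Y : Type u) :=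
  fun p => (X ◁ (show PUnit.{u + 1} ⟶ Y from TypeCat.ofHom fun _ => p.1)) p.2

variable [SymmetricCategory (Type u)] [MonoidalClosed (Type u)]

lemma theta_bijective (X Y : Type u) : Function.Bijective (theta X Y) := by
  haveI : PreservesColimitsOfSize.{u, u} (tensorLeft X) :=
    (ihom.adjunction X).leftAdjoint_preservesColimits
  let i := (prodIsColimit X Y).coconePointUniqueUpToIso
    (isColimitOfPreserves (tensorLeft X) (ptIsColimit Y))
  have h : theta X Y = i.hom := rfl
  rw [h]
  exact (isIso_iff_bijective _).mp inferInstance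

lemma hom_bijective {X Y : Type u} (f : X ⟶ Y) [IsIso f] : Function.Bijective f :=
  (isIso_iff_bijective _).mp inferInstance

lemma unit_facts :
    (Nonempty (𝟙_ (Type u)) ∧ Subsingleton (𝟙_ (Type u))) ∧
      (Nonempty (PUnit.{u + 1} ⊗ PUnit.{u + 1} : Type u) ∧
        Subsingleton (PUnit.{u + 1} ⊗ PUnit.{u + 1} : Type u)) := by
  have hF : Function.Bijective
      (fun p : (𝟙_ (Type u)) × (PUnit.{u + 1} ⊗ PUnit.{u + 1} : Type u) =>
        (λ_ PUnit.{u + 1}).hom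
          ((β_ PUnit.{u + 1} (𝟙_ (Type u))).hom (theta PUnit.{u + 1} (𝟙_ (Type u)) p))) :=
    ((hom_bijective (λ_ PUnit.{u + 1}).hom).comp
      (hom_bijective (β_ PUnit.{u + 1} (𝟙_ (Type u))).hom)).comp
        (theta_bijective PUnit.{u + 1} (𝟙_ (Type u)))
  set F := fun p : (𝟙_ (Type u)) × (PUnit.{u + 1} ⊗ PUnit.{u + 1} : Type u) =>
    (λ_ PUnit.{u + 1}).hom
      ((β_ PUnit.{u + 1} (𝟙_ (Type u))).hom (theta PUnit.{u + 1} (𝟙_ (Type u)) p)) with hFdef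
  obtain ⟨p0, -⟩ := hF.2 PUnit.unit
  refine ⟨⟨⟨p0.1⟩, ?_⟩, ⟨p0.2⟩, ?_⟩
  · constructor
    intro a b
    have : F (a, p0.2) = F (b, p0.2) := rfl
    have := hF.1 this
    exact congrArg Prod.fst this
  · constructor
    intro a b
    have : F (p0.1, a) = F (p0.1, b) := rfl
    have := hF.1 this
    exact congrArg Prod.snd this

/-- The unit is a one-element set. -/
noncomputable def unitIso : (𝟙_ (Type u) : Type u) ≅ PUnit.{u + 1} := by
  obtain ⟨⟨hne, hsub⟩, -⟩ := unit_facts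
  haveI := hsub
  haveI : Unique (𝟙_ (Type u)) := ⟨⟨hne.some⟩, fun _ => Subsingleton.elim _ _⟩
  exact (Equiv.equivPUnit _).toIso

/-- The tensor product is the cartesian product. -/
noncomputable def tensorNatIso :
    MonoidalCategory.tensor (Type u) ≅ cartesianProductFunctor.{u} := by
  obtain ⟨⟨hne, hsub⟩, hTne, hTsub⟩ := unit_facts
  let e : 𝟙_ (Type u) := hne.some
  -- the constant map to the unit
  let c : ∀ A : Type u, A ⟶ 𝟙_ (Type u) := fun _ => TypeCat.ofHom fun _ => e
  -- the two "projections"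
  let p1 : ∀ X Y : Type u, (X ⊗ Y : Type u) ⟶ X := fun X Y => (X ◁ c Y) ≫ (ρ_ X).hom
  let p2 : ∀ X Y : Type u, (X ⊗ Y : Type u) ⟶ Y := fun X Y => (c X ▷ Y) ≫ (λ_ Y).hom
  let ψ : ∀ X Y : Type u, (X ⊗ Y : Type u) → X × Y := fun X Y z => (p1 X Y z, p2 X Y z)
  -- the covering family
  let Θ : ∀ (X Y : Type u), X → Y → (PUnit.{u + 1} ⊗ PUnit.{u + 1} : Type u) → (X ⊗ Y : Type u) :=
    fun X Y x y t =>
      theta X Y (y, (β_ PUnit.{u + 1} X).hom (theta PUnit.{u + 1} X (x, t)))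
  have hΘsurj : ∀ (X Y : Type u) (z : (X ⊗ Y : Type u)), ∃ x y t, Θ X Y x y t = z := by
    intro X Y z
    obtain ⟨⟨y, u⟩, hu⟩ := (theta_bijective X Y).2 z
    obtain ⟨v, hv⟩ := (hom_bijective (β_ PUnit.{u + 1} X).hom).2 u
    obtain ⟨⟨x, t⟩, ht⟩ := (theta_bijective PUnit.{u + 1} X).2 v
    exact ⟨x, y, t, by simp only [Θ, ht, hv, hu]⟩
  have h1 : ∀ (X Y : Type u) (x : X) (y : Y) t, p1 X Y (Θ X Y x y t) = x := by
    intro X Y x y t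
    have key : (PUnit.{u + 1} ◁ (show PUnit.{u + 1} ⟶ X from TypeCat.ofHom fun _ => x)) ≫
        (β_ PUnit.{u + 1} X).hom ≫ (X ◁ (show PUnit.{u + 1} ⟶ Y from TypeCat.ofHom fun _ => y)) ≫ p1 X Y =
        (β_ PUnit.{u + 1} PUnit.{u + 1}).hom ≫ (PUnit.{u + 1} ◁ c PUnit.{u + 1}) ≫
          (ρ_ PUnit.{u + 1}).hom ≫ (show PUnit.{u + 1} ⟶ X from TypeCat.ofHom fun _ => x) := by
      rw [BraidedCategory.braiding_naturality_right_assoc]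
      show _ ≫ _ ≫ (X ◁ _) ≫ (X ◁ c Y) ≫ _ = _
      rw [← MonoidalCategory.whiskerLeft_comp_assoc]
      have hc : ((show PUnit.{u + 1} ⟶ Y from TypeCat.ofHom fun _ => y) ≫ c Y) = c PUnit.{u + 1} := rfl
      rw [hc, ← whisker_exchange_assoc, MonoidalCategory.rightUnitor_naturality]
    exact types_congr_hom key t
  have h2 : ∀ (X Y : Type u) (x : X) (y : Y) t, p2 X Y (Θ X Y x y t) = y := by
    intro X Y x y t
    have key : (PUnit.{u + 1} ◁ (show PUnit.{u + 1} ⟶ X from TypeCat.ofHom fun _ => x)) ≫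
        (β_ PUnit.{u + 1} X).hom ≫ (X ◁ (show PUnit.{u + 1} ⟶ Y from TypeCat.ofHom fun _ => y)) ≫ p2 X Y =
        (PUnit.{u + 1} ◁ (show PUnit.{u + 1} ⟶ X from TypeCat.ofHom fun _ => x)) ≫
          (β_ PUnit.{u + 1} X).hom ≫ (c X ▷ PUnit.{u + 1}) ≫ (λ_ PUnit.{u + 1}).hom ≫
          (show PUnit.{u + 1} ⟶ Y from TypeCat.ofHom fun _ => y) := by
      show _ ≫ _ ≫ (X ◁ _) ≫ (c X ▷ Y) ≫ _ = _
      rw [whisker_exchange_assoc, MonoidalCategory.leftUnitor_naturality]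
    exact types_congr_hom key t
  have hψ : ∀ X Y : Type u, Function.Bijective (ψ X Y) := by
    intro X Y
    constructor
    · intro z z' h
      obtain ⟨x, y, t, rfl⟩ := hΘsurj X Y z
      obtain ⟨x', y', t', rfl⟩ := hΘsurj X Y z'
      have hx : x = x' := by
        have := congrArg Prod.fst h
        rwa [show (ψ X Y (Θ X Y x y t)).1 = x from h1 X Y x y t,
          show (ψ X Y (Θ X Y x' y' t')).1 = x' from h1 X Y x' y' t'] at this
      have hy : y = y' := by
        have := congrArg Prod.snd h
        rwa [show (ψ X Y (Θ X Y x y t)).2 = y from h2 X Y x y t,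
          show (ψ X Y (Θ X Y x' y' t')).2 = y' from h2 X Y x' y' t'] at this
      subst hx; subst hy
      rw [hTsub.elim t t']
    · rintro ⟨x, y⟩
      exact ⟨Θ X Y x y hTne.some, Prod.ext (h1 X Y x y _) (h2 X Y x y _)⟩
  refine NatIso.ofComponents (fun p => (Equiv.ofBijective _ (hψ p.1 p.2)).toIso) ?_
  rintro ⟨X, Y⟩ ⟨X', Y'⟩ ⟨f, g⟩
  apply ConcreteCategory.hom_ext; intro z
  refine Prod.ext ?_ ?_
  · have key : (f ⊗ₘ g) ≫ p1 X' Y' = p1 X Y ≫ f := by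
      show (f ⊗ₘ g) ≫ (X' ◁ c Y') ≫ _ = _
      rw [← MonoidalCategory.id_tensorHom, MonoidalCategory.tensorHom_comp_tensorHom_assoc,
        Category.comp_id]
      have hc : g ≫ c Y' = c Y := rfl
      rw [hc, MonoidalCategory.tensorHom_def'_assoc,
        MonoidalCategory.rightUnitor_naturality]
      rfl
    exact types_congr_hom key z
  · have key : (f ⊗ₘ g) ≫ p2 X' Y' = p2 X Y ≫ g := by
      show (f ⊗ₘ g) ≫ (c X' ▷ Y') ≫ _ = _
      rw [← MonoidalCategory.tensorHom_id, MonoidalCategory.tensorHom_comp_tensorHom_assoc,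
        Category.comp_id]
      have hc : f ≫ c X' = c X := rfl
      rw [hc, MonoidalCategory.tensorHom_def_assoc,
        MonoidalCategory.leftUnitor_naturality]
      rfl
    exact types_congr_hom key z

end Aux

/-- Every closed symmetric monoidal structure on the category `Set` (= `Type u`) of sets
has unit isomorphic to the one-element set, and its tensor product functor is (naturally)
isomorphic to the cartesian product functor. -/
theorem closed_symmetric_monoidal_on_type
    (M : MonoidalCategory (Type u))
    (_ : @SymmetricCategory (Type u) _ M)
    (_ : @MonoidalClosed (Type u) _ M) :
    Nonempty ((@MonoidalCategoryStruct.tensorUnit (Type u) _ M.toMonoidalCategoryStruct)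
        ≅ PUnit.{u + 1}) ∧
    Nonempty ((@MonoidalCategory.tensor (Type u) _ M) ≅ cartesianProductFunctor.{u}) := by
  rename_i sym cl
  exact ⟨⟨@unitIso.{u} M sym cl⟩, ⟨@tensorNatIso.{u} M sym cl⟩⟩
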